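/- Let G be a finite simple graph with at least one vertex and let k ≥ 4 be an even integer. Let λ_min(A(G)) denote the least eigenvalue of the adjacency matrix of G. Then λ_min(A(G)) is an adjacency H-eigenvalue of the generalized power hypergraph G^{k,k/2}, and every adjacency H-eigenvalue of G^{k,k/2} is at least λ_min(A(G)); that is, the least adjacency H-eigenvalue of G^{k,k/2} equals the least adjacency eigenvalue of G. -/

import Mathlib

open Finset

/-- The edge set of the generalized power hypergraph `G^{k, k/2}` (with `s = k/2`):
each edge `{u,v}` of `G` is blown up into the `2s`-set `({u} × Fin s) ∪ ({v} × Fin s)`. -/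
def powerEdges {V : Type*} [Fintype V] [DecidableEq V] (G : SimpleGraph V)
    [DecidableRel G.Adj] (s : ℕ) : Finset (Finset (V × Fin s)) :=
  (Finset.univ.filter fun p : V × V => G.Adj p.1 p.2).image
    (fun p => ({p.1} ×ˢ (Finset.univ : Finset (Fin s)))
        ∪ ({p.2} ×ˢ (Finset.univ : Finset (Fin s))))

/-- `lam` is an adjacency H-eigenvalue of the generalized power hypergraph `G^{k,s}`
(`k = 2s`) with H-eigenvector `x`. -/
def IsAdjHEigPow {V : Type*} [Fintype V] [DecidableEq V] (G : SimpleGraph V)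
    [DecidableRel G.Adj] (k s : ℕ) (lam : ℝ) (x : V × Fin s → ℝ) : Prop :=
  x ≠ 0 ∧ ∀ p : V × Fin s,
    lam * x p ^ (k - 1)
      = ∑ e ∈ (powerEdges G s).filter (fun e => p ∈ e), ∏ w ∈ e.erase p, x w

/-- `lam` is a signless Laplacian H-eigenvalue of the generalized power hypergraph
`G^{k,s}` (`k = 2s`) with H-eigenvector `x`. -/
def IsQHEigPow {V : Type*} [Fintype V] [DecidableEq V] (G : SimpleGraph V)
    [DecidableRel G.Adj] (k s : ℕ) (lam : ℝ) (x : V × Fin s → ℝ) : Prop :=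
  x ≠ 0 ∧ ∀ p : V × Fin s,
    lam * x p ^ (k - 1)
      = (((powerEdges G s).filter (fun e => p ∈ e)).card : ℝ) * x p ^ (k - 1)
        + ∑ e ∈ (powerEdges G s).filter (fun e => p ∈ e), ∏ w ∈ e.erase p, x w

open Matrix

def blow {V : Type*} [DecidableEq V] (s : ℕ) (v u : V) : Finset (V × Fin s) :=
  ({v} ×ˢ (Finset.univ : Finset (Fin s))) ∪ ({u} ×ˢ (Finset.univ : Finset (Fin s)))

lemma mem_blow {V : Type*} [DecidableEq V] {s : ℕ} {v u a : V} {i : Fin s} :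
    (a, i) ∈ blow s v u ↔ a = v ∨ a = u := by
  simp [blow, Finset.mem_product, eq_comm]

lemma blow_comm {V : Type*} [DecidableEq V] (s : ℕ) (v u : V) :
    blow s v u = blow s u v := by
  simp [blow, Finset.union_comm]

lemma powerEdges_eq {V : Type*} [Fintype V] [DecidableEq V] (G : SimpleGraph V)
    [DecidableRel G.Adj] (s : ℕ) :
    powerEdges G s = (Finset.univ.filter fun p : V × V => G.Adj p.1 p.2).image
      (fun p => blow s p.1 p.2) := rfl

lemma filter_powerEdges {V : Type*} [Fintype V] [DecidableEq V] (G : SimpleGraph V)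
    [DecidableRel G.Adj] {s : ℕ} (v : V) (i : Fin s) :
    (powerEdges G s).filter (fun e => (v, i) ∈ e)
      = (G.neighborFinset v).image (fun u => blow s v u) := by
  ext e
  rw [powerEdges_eq]
  simp only [Finset.mem_filter, Finset.mem_image, Finset.mem_filter,
    Finset.mem_univ, true_and, SimpleGraph.mem_neighborFinset]
  constructor
  · rintro ⟨⟨⟨a, b⟩, hab, rfl⟩, hmem⟩
    rcases mem_blow.mp hmem with rfl | rfl
    · exact ⟨b, hab, rfl⟩
    · exact ⟨a, hab.symm, blow_comm s v a⟩
  · rintro ⟨u, hu, rfl⟩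
    exact ⟨⟨(v, u), hu, rfl⟩, mem_blow.mpr (Or.inl rfl)⟩

lemma sum_filter_powerEdges {V : Type*} [Fintype V] [DecidableEq V] (G : SimpleGraph V)
    [DecidableRel G.Adj] {s : ℕ} (v : V) (i : Fin s) (f : Finset (V × Fin s) → ℝ) :
    ∑ e ∈ (powerEdges G s).filter (fun e => (v, i) ∈ e), f e
      = ∑ u ∈ G.neighborFinset v, f (blow s v u) := by
  rw [filter_powerEdges G v i, Finset.sum_image]
  intro a ha b hb hab
  have : (a, i) ∈ blow s v b := (show blow s v a = blow s v b from hab) ▸ mem_blow.mpr (Or.inr rfl)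
  rcases mem_blow.mp this with rfl | rfl
  · exact absurd (SimpleGraph.mem_neighborFinset _ _ _ |>.mp ha) (G.irrefl)
  · rfl

lemma erase_blow_prod {V : Type*} [DecidableEq V] {s : ℕ} {v u : V} (huv : u ≠ v)
    (i : Fin s) (x : V × Fin s → ℝ) :
    ∏ w ∈ (blow s v u).erase (v, i), x w
      = (∏ j ∈ Finset.univ.erase i, x (v, j)) * ∏ j : Fin s, x (u, j) := by
  have h1 : (blow s v u).erase (v, i)
      = ({v} ×ˢ (Finset.univ.erase i)) ∪ ({u} ×ˢ (Finset.univ : Finset (Fin s))) := by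
    ext ⟨a, j⟩
    simp only [blow, Finset.mem_erase, Finset.mem_union, Finset.mem_product,
      Finset.mem_singleton, Finset.mem_univ, and_true]
    constructor
    · rintro ⟨hne, rfl | rfl⟩
      · exact Or.inl ⟨rfl, fun h => hne (by rw [h])⟩
      · exact Or.inr rfl
    · rintro (⟨rfl, hj⟩ | rfl)
      · exact ⟨fun h => hj (congrArg Prod.snd h), Or.inl rfl⟩
      · exact ⟨fun h => huv (congrArg Prod.fst h), Or.inr rfl⟩
  rw [h1, Finset.prod_union, Finset.prod_product, Finset.prod_product]
  · simp
  · rw [Finset.disjoint_left]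
    rintro ⟨a, j⟩ ha hb
    simp only [Finset.mem_product, Finset.mem_singleton] at ha hb
    exact huv (hb.1 ▸ ha.1)
lemma rayleigh {V : Type*} [Fintype V] [DecidableEq V] (G : SimpleGraph V)
    [DecidableRel G.Adj] (lam : ℝ)
    (hLeast : ∀ μ : ℝ, (∃ y : V → ℝ, y ≠ 0 ∧ (G.adjMatrix ℝ).mulVec y = μ • y) → lam ≤ μ)
    (y : V → ℝ) :
    lam * (y ⬝ᵥ y) ≤ y ⬝ᵥ (G.adjMatrix ℝ) *ᵥ y := by
  set A := G.adjMatrix ℝ with hA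
  set M := A - lam • (1 : Matrix V V ℝ) with hM
  have hMh : M.IsHermitian := by
    show Mᴴ = M
    rw [hM, conjTranspose_sub]
    congr 1
    · ext i j
      simp only [Matrix.conjTranspose_apply, star_trivial, hA,
        SimpleGraph.adjMatrix_apply]
      simp [SimpleGraph.adj_comm]
    · ext i j
      simp [Matrix.conjTranspose_apply, Matrix.one_apply]
      rcases eq_or_ne i j with h | h
      · simp [h]
      · simp [h, Ne.symm h]
  have hev : ∀ i, 0 ≤ hMh.eigenvalues i := by
    intro i
    have hb := hMh.mulVec_eigenvectorBasis i
    have hne : ((WithLp.equiv 2 _) (hMh.eigenvectorBasis i) : V → ℝ) ≠ 0 := by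
      have h0 := (hMh.eigenvectorBasis).orthonormal.ne_zero i
      intro h
      apply h0
      ext j
      exact congrFun h j
    have hAv : A *ᵥ ((WithLp.equiv 2 _) (hMh.eigenvectorBasis i) : V → ℝ)
        = (hMh.eigenvalues i + lam) • ((WithLp.equiv 2 _) (hMh.eigenvectorBasis i) : V → ℝ) := by
      have hAe : A = M + lam • 1 := by rw [hM]; abel
      rw [hAe, add_mulVec, WithLp.equiv_apply, hb, smul_mulVec, one_mulVec, add_smul]
    have := hLeast (hMh.eigenvalues i + lam) ⟨_, hne, hAv⟩
    linarith
  have hps : M.PosSemidef := hMh.posSemidef_iff_eigenvalues_nonneg.mpr hev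
  have h2 := hps.dotProduct_mulVec_nonneg y
  simp only [star_trivial, hM, sub_mulVec, dotProduct_sub, smul_mulVec, one_mulVec,
    dotProduct_smul, smul_eq_mul] at h2
  linarith
/-- for a nonempty finite simple graph `G`, if `λ` is the least eigenvalue of
the adjacency matrix `A(G)` (it is an eigenvalue and is `≤` every eigenvalue), then `λ` is
an adjacency H-eigenvalue of `G^{k,k/2}` and every adjacency H-eigenvalue of `G^{k,k/2}`
is at least `λ`; i.e. the least adjacency H-eigenvalue of `G^{k,k/2}` equals the least
adjacency eigenvalue of `G`. -/
theorem stmt15 {V : Type*} [Fintype V] [DecidableEq V] [Nonempty V] (G : SimpleGraph V)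
    [DecidableRel G.Adj] (k s : ℕ) (hk : 4 ≤ k) (hks : k = 2 * s)
    (lam : ℝ)
    (hEig : ∃ y : V → ℝ, y ≠ 0 ∧ (G.adjMatrix ℝ).mulVec y = lam • y)
    (hLeast : ∀ μ : ℝ, (∃ y : V → ℝ, y ≠ 0 ∧ (G.adjMatrix ℝ).mulVec y = μ • y) → lam ≤ μ) :
    (∃ x : V × Fin s → ℝ, IsAdjHEigPow G k s lam x) ∧
      ∀ μ : ℝ, (∃ x : V × Fin s → ℝ, IsAdjHEigPow G k s μ x) → lam ≤ μ := by
  subst hks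
  obtain ⟨m, rfl⟩ : ∃ m, s = m + 2 := ⟨s - 2, by omega⟩
  have hk1 : 2 * (m + 2) - 1 = 2 * m + 3 := by omega
  constructor
  · -- existence of an H-eigenvector for lam
    obtain ⟨y, hy0, hyE⟩ := hEig
    set t : V → ℝ := fun v => |y v| ^ ((m + 2 : ℝ))⁻¹ with htdef
    have ht0 : ∀ v, 0 ≤ t v := fun v => Real.rpow_nonneg (abs_nonneg _) _
    have hts : ∀ v, t v ^ (m + 2) = |y v| := by
      intro v
      rw [htdef]
      rw [← Real.rpow_natCast (|y v| ^ ((m + 2 : ℝ))⁻¹) (m + 2),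
        ← Real.rpow_mul (abs_nonneg _)]
      rw [show ((m + 2 : ℝ))⁻¹ * ((m + 2 : ℕ) : ℝ) = 1 by
        push_cast
        field_simp]
      exact Real.rpow_one _
    set x : V × Fin (m + 2) → ℝ :=
      fun p => if p.2 = 0 ∧ y p.1 < 0 then -(t p.1) else t p.1 with hxdef
    have hsq : ∀ p, x p ^ 2 = t p.1 ^ 2 := by
      intro p; rw [hxdef]; dsimp only; split <;> ring
    have hAy : ∀ v, ∑ u ∈ G.neighborFinset v, y u = lam * y v := by
      intro v
      have := congrFun hyE v
      rwa [SimpleGraph.adjMatrix_mulVec_apply, Pi.smul_apply, smul_eq_mul] at this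
    have hP : ∀ u, ∏ j : Fin (m + 2), x (u, j) = y u := by
      intro u
      rw [← Finset.mul_prod_erase Finset.univ _ (Finset.mem_univ (0 : Fin (m + 2)))]
      have h1 : ∏ j ∈ Finset.univ.erase (0 : Fin (m + 2)), x (u, j) = t u ^ (m + 1) := by
        have hconst : ∀ j ∈ Finset.univ.erase (0 : Fin (m + 2)), x (u, j) = t u := by
          intro j hj
          rw [hxdef]
          exact if_neg (fun h => (Finset.mem_erase.mp hj).1 h.1)
        rw [Finset.prod_congr rfl hconst, Finset.prod_const,
          Finset.card_erase_of_mem (Finset.mem_univ _), Finset.card_univ, Fintype.card_fin]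
        norm_num
      rw [h1, hxdef]
      dsimp only
      by_cases hneg : y u < 0
      · rw [if_pos ⟨rfl, hneg⟩]
        have : -(t u) * t u ^ (m + 1) = -(t u ^ (m + 2)) := by ring
        rw [this, hts, abs_of_neg hneg, neg_neg]
      · rw [if_neg (fun h => hneg h.2)]
        have : t u * t u ^ (m + 1) = t u ^ (m + 2) := by ring
        rw [this, hts, abs_of_nonneg (not_lt.mp hneg)]
    refine ⟨x, ?_, ?_⟩
    · -- x ≠ 0
      obtain ⟨v, hv⟩ := Function.ne_iff.mp hy0
      have htv : 0 < t v := Real.rpow_pos_of_pos (abs_pos.mpr hv) _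
      intro h
      have hx1 : x (v, (⟨1, by omega⟩ : Fin (m + 2))) = 0 := congrFun h _
      rw [hxdef] at hx1
      dsimp only at hx1
      rw [if_neg (fun hc => by simpa using congrArg Fin.val hc.1)] at hx1
      exact htv.ne' hx1
    · intro p
      obtain ⟨v, i⟩ := p
      rw [sum_filter_powerEdges G v i]
      have hstep : ∀ u ∈ G.neighborFinset v,
          ∏ w ∈ (blow (m + 2) v u).erase (v, i), x w
            = (∏ j ∈ Finset.univ.erase i, x (v, j)) * y u := by
        intro u hu
        rw [erase_blow_prod ((SimpleGraph.mem_neighborFinset _ _ _ |>.mp hu).ne')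
          i x, hP]
      rw [Finset.sum_congr rfl hstep, ← Finset.mul_sum, hAy, hk1]
      -- goal : lam * x (v, i) ^ (2 * m + 3) = E * (lam * y v)
      have hEyv : (∏ j ∈ Finset.univ.erase i, x (v, j)) * y v = x (v, i) ^ (2 * m + 3) := by
        have hy_eq : y v = x (v, i) * ∏ j ∈ Finset.univ.erase i, x (v, j) := by
          have h2 := Finset.mul_prod_erase Finset.univ (fun j => x (v, j)) (Finset.mem_univ i)
          rw [← hP v, ← h2]
        have hE2 : (∏ j ∈ Finset.univ.erase i, x (v, j)) ^ 2 = (t v ^ 2) ^ (m + 1) := by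
          have hc : ∀ j ∈ Finset.univ.erase i, x (v, j) ^ 2 = t v ^ 2 := fun j _ => hsq (v, j)
          rw [← Finset.prod_pow, Finset.prod_congr rfl hc, Finset.prod_const,
            Finset.card_erase_of_mem (Finset.mem_univ _), Finset.card_univ, Fintype.card_fin]
          norm_num
        have hxi2 : x (v, i) ^ 2 = t v ^ 2 := hsq (v, i)
        calc (∏ j ∈ Finset.univ.erase i, x (v, j)) * y v
            = x (v, i) * (∏ j ∈ Finset.univ.erase i, x (v, j)) ^ 2 := by rw [hy_eq]; ring
          _ = x (v, i) * (x (v, i) ^ 2) ^ (m + 1) := by rw [hE2, hxi2]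
          _ = x (v, i) ^ (2 * m + 3) := by ring
      rw [← hEyv]
      ring
  · -- lower bound
    intro μ ⟨x, hx0, hxE⟩
    by_cases hmu : μ = 0
    · subst hmu
      obtain ⟨v₀⟩ := ‹Nonempty V›
      have hr := rayleigh G lam hLeast (Pi.single v₀ 1)
      have h1 : (Pi.single v₀ 1 : V → ℝ) ⬝ᵥ (Pi.single v₀ 1 : V → ℝ) = 1 := by
        simp [dotProduct, Pi.single_apply]
      have h2 : (Pi.single v₀ 1 : V → ℝ) ⬝ᵥ (G.adjMatrix ℝ) *ᵥ (Pi.single v₀ 1 : V → ℝ) = 0 := by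
        have hmv : (G.adjMatrix ℝ) *ᵥ (Pi.single v₀ 1 : V → ℝ)
            = fun v => ∑ u ∈ G.neighborFinset v, (Pi.single v₀ 1 : V → ℝ) u :=
          funext fun v => SimpleGraph.adjMatrix_mulVec_apply _ _ _
        rw [hmv, dotProduct]
        refine Finset.sum_eq_zero fun v _ => ?_
        by_cases h : v = v₀
        · subst h
          rw [Pi.single_eq_same, one_mul]
          refine Finset.sum_eq_zero fun u hu => ?_
          exact Pi.single_eq_of_ne (SimpleGraph.mem_neighborFinset _ _ _ |>.mp hu).ne' 1
        · rw [Pi.single_eq_of_ne h, zero_mul]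
      rw [h1, h2, mul_one] at hr
      exact hr
    · set P : V → ℝ := fun v => ∏ j : Fin (m + 2), x (v, j) with hPdef
      have hK : ∀ (v : V) (i : Fin (m + 2)),
          μ * x (v, i) ^ (2 * (m + 2)) = P v * ∑ u ∈ G.neighborFinset v, P u := by
        intro v i
        have he := hxE (v, i)
        rw [sum_filter_powerEdges G v i] at he
        have hstep : ∀ u ∈ G.neighborFinset v,
            ∏ w ∈ (blow (m + 2) v u).erase (v, i), x w
              = (∏ j ∈ Finset.univ.erase i, x (v, j)) * P u := by
          intro u hu
          rw [erase_blow_prod ((SimpleGraph.mem_neighborFinset _ _ _ |>.mp hu).ne') i x]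
        rw [Finset.sum_congr rfl hstep, ← Finset.mul_sum, hk1] at he
        have hy_eq : P v = x (v, i) * ∏ j ∈ Finset.univ.erase i, x (v, j) :=
          (Finset.mul_prod_erase Finset.univ (fun j => x (v, j)) (Finset.mem_univ i)).symm
        calc μ * x (v, i) ^ (2 * (m + 2))
            = (μ * x (v, i) ^ (2 * m + 3)) * x (v, i) := by ring
          _ = ((∏ j ∈ Finset.univ.erase i, x (v, j)) * ∑ u ∈ G.neighborFinset v, P u)
                * x (v, i) := by rw [he]
          _ = P v * ∑ u ∈ G.neighborFinset v, P u := by rw [hy_eq]; ring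
      have hsq : ∀ (v : V) (i : Fin (m + 2)), x (v, i) ^ 2 = x (v, 0) ^ 2 := by
        intro v i
        have h := mul_left_cancel₀ hmu ((hK v i).trans (hK v 0).symm)
        have h' : (x (v, i) ^ 2) ^ (m + 2) = (x (v, 0) ^ 2) ^ (m + 2) := by
          rw [← pow_mul, ← pow_mul]
          exact h
        exact (pow_left_strictMonoOn₀ (Nat.succ_ne_zero _)).injOn
          (sq_nonneg (x (v, i))) (sq_nonneg (x (v, 0))) h'
      have hPsq : ∀ v, P v ^ 2 = x (v, 0) ^ (2 * (m + 2)) := by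
        intro v
        rw [hPdef]
        dsimp only
        rw [← Finset.prod_pow, Finset.prod_congr rfl (fun j _ => hsq v j),
          Finset.prod_const, Finset.card_univ, Fintype.card_fin, ← pow_mul, mul_comm]
      have hAP : (G.adjMatrix ℝ) *ᵥ P = fun v => ∑ u ∈ G.neighborFinset v, P u := by
        funext v
        exact SimpleGraph.adjMatrix_mulVec_apply _ _ _
      have hdot : P ⬝ᵥ (G.adjMatrix ℝ) *ᵥ P = μ * (P ⬝ᵥ P) := by
        rw [hAP, dotProduct, dotProduct, Finset.mul_sum]
        refine Finset.sum_congr rfl fun v _ => ?_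
        have := (hK v 0).symm
        rw [this, ← hPsq v]
        ring
      obtain ⟨p, hp⟩ := Function.ne_iff.mp hx0
      have hx00 : x (p.1, 0) ^ 2 ≠ 0 := by
        rw [← hsq p.1 p.2]
        exact pow_ne_zero _ (by rwa [← Prod.mk.eta (p := p)] at hp)
      have hPv : P p.1 ≠ 0 := by
        rw [hPdef]
        dsimp only
        refine Finset.prod_ne_zero_iff.mpr fun j _ => ?_
        intro h
        exact hx00 (by rw [← hsq p.1 j, h]; ring)
      have hpos : 0 < P ⬝ᵥ P := by
        rw [dotProduct]
        refine Finset.sum_pos' (fun v _ => mul_self_nonneg _) ⟨p.1, Finset.mem_univ _, ?_⟩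
        exact mul_self_pos.mpr hPv
      have hr := rayleigh G lam hLeast P
      rw [hdot] at hr
      exact le_of_mul_le_mul_right (by linarith [hr]) hpos
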